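/- Let G be a group containing an infinite finitely generated subgroup. Then there is a finite subset S of G such that for every integer N ≥ 1 there exists a non-zero function ρ: G → ℕ with N·ρ(t) ≤ Σ_{s∈S} ρ(s⁻¹t) for all t ∈ G. -/

import Mathlib

open Finset

section Balls

variable {G : Type*} [Group G] [DecidableEq G] (S : Finset G)

/-- Ball of radius `n` for the generating set `S`. -/
def stmt13Ball : ℕ → Finset G
  | 0 => {1}
  | n + 1 => S.biUnion (fun s => (stmt13Ball n).image (s * ·))

lemma stmt13Ball_succ_mem {x : G} {n : ℕ} :
    x ∈ stmt13Ball S (n + 1) ↔ ∃ s ∈ S, ∃ y ∈ stmt13Ball S n, x = s * y := by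
  constructor
  · intro hx
    simp only [stmt13Ball, mem_biUnion, mem_image] at hx
    obtain ⟨s, hs, y, hy, rfl⟩ := hx
    exact ⟨s, hs, y, hy, rfl⟩
  · rintro ⟨s, hs, y, hy, rfl⟩
    simp only [stmt13Ball, mem_biUnion, mem_image]
    exact ⟨s, hs, y, hy, rfl⟩

variable {S}

lemma stmt13Ball_mono (h1 : (1 : G) ∈ S) : ∀ {m n : ℕ}, m ≤ n →
    stmt13Ball S m ⊆ stmt13Ball S n := by
  have step : ∀ n : ℕ, stmt13Ball S n ⊆ stmt13Ball S (n + 1) := by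
    intro n
    induction n with
    | zero =>
      intro x hx
      simp only [stmt13Ball, mem_singleton] at hx
      subst hx
      exact (stmt13Ball_succ_mem S).2 ⟨1, h1, 1, by simp [stmt13Ball]⟩
    | succ n ih =>
      intro x hx
      obtain ⟨s, hs, y, hy, rfl⟩ := (stmt13Ball_succ_mem S).1 hx
      exact (stmt13Ball_succ_mem S).2 ⟨s, hs, y, ih hy, rfl⟩
  intro m n hmn
  induction hmn with
  | refl => exact fun _ h => h
  | step _ ih => exact fun x hx => step _ (ih hx)

lemma stmt13Ball_mul {m n : ℕ} {x y : G} (hx : x ∈ stmt13Ball S m)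
    (hy : y ∈ stmt13Ball S n) : x * y ∈ stmt13Ball S (m + n) := by
  induction m generalizing x with
  | zero =>
    simp only [stmt13Ball, mem_singleton] at hx
    subst hx; simpa using hy
  | succ m ih =>
    obtain ⟨s, hs, z, hz, rfl⟩ := (stmt13Ball_succ_mem S).1 hx
    have : s * (z * y) ∈ stmt13Ball S (m + n + 1) :=
      (stmt13Ball_succ_mem S).2 ⟨s, hs, z * y, ih hz, rfl⟩
    rw [← mul_assoc] at this
    rw [show m + 1 + n = m + n + 1 by omega]
    exact this

lemma stmt13Ball_mul_right {n : ℕ} {x s : G} (hx : x ∈ stmt13Ball S n) (hs : s ∈ S) :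
    x * s ∈ stmt13Ball S (n + 1) := by
  have hs1 : s ∈ stmt13Ball S 1 :=
    (stmt13Ball_succ_mem S).2 ⟨s, hs, 1, by simp [stmt13Ball], by simp⟩
  exact stmt13Ball_mul hx hs1

lemma stmt13Ball_inv (hinv : ∀ s ∈ S, s⁻¹ ∈ S) {n : ℕ} {x : G}
    (hx : x ∈ stmt13Ball S n) : x⁻¹ ∈ stmt13Ball S n := by
  induction n generalizing x with
  | zero => simp only [stmt13Ball, mem_singleton] at hx ⊢; simp [hx]
  | succ n ih =>
    obtain ⟨s, hs, y, hy, rfl⟩ := (stmt13Ball_succ_mem S).1 hx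
    rw [mul_inv_rev]
    exact stmt13Ball_mul_right (ih hy) (hinv s hs)

lemma stmt13Ball_covers (h1 : (1 : G) ∈ S) (hinv : ∀ s ∈ S, s⁻¹ ∈ S)
    {T : Finset G} (hTS : T ⊆ S) {x : G} (hx : x ∈ Subgroup.closure (T : Set G)) :
    ∃ n, x ∈ stmt13Ball S n := by
  induction hx using Subgroup.closure_induction with
  | mem x hxT =>
    exact ⟨1, (stmt13Ball_succ_mem S).2 ⟨x, hTS hxT, 1, by simp [stmt13Ball], by simp⟩⟩
  | one => exact ⟨0, by simp [stmt13Ball]⟩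
  | mul x y _ _ ihx ihy =>
    obtain ⟨m, hm⟩ := ihx; obtain ⟨n, hn⟩ := ihy
    exact ⟨m + n, stmt13Ball_mul hm hn⟩
  | inv x _ ihx =>
    obtain ⟨n, hn⟩ := ihx
    exact ⟨n, stmt13Ball_inv hinv hn⟩

end Balls

section Konig

open CategoryTheory

lemma stmt13_konig {X : ℕ → Type*} [∀ n, Finite (X n)] [∀ n, Nonempty (X n)]
    (f : ∀ n, X (n + 1) → X n) : ∃ t : ∀ n, X n, ∀ n, f n (t (n + 1)) = t n := by
  haveI : ∀ j : ℕᵒᵖ, Finite ((Functor.ofOpSequence (fun n => TypeCat.ofHom (f n))).obj j) :=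
    fun j => inferInstanceAs (Finite (X j.unop))
  haveI : ∀ j : ℕᵒᵖ, Nonempty ((Functor.ofOpSequence (fun n => TypeCat.ofHom (f n))).obj j) :=
    fun j => inferInstanceAs (Nonempty (X j.unop))
  obtain ⟨u, hu⟩ := nonempty_sections_of_finite_inverse_system (Functor.ofOpSequence (fun n => TypeCat.ofHom (f n)))
  refine ⟨fun n => u ⟨n⟩, fun n => ?_⟩
  have := hu ((homOfLE (Nat.le_add_right n 1)).op)
  rw [Functor.ofOpSequence_map_homOfLE_succ] at this
  exact this

end Konig

section Growth

variable {G : Type*} [Group G] [DecidableEq G] {S : Finset G}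

lemma stmt13Ball_strict {H : Subgroup G} (Hinf : (H : Set G).Infinite)
    {T : Finset G} (hT : Subgroup.closure (T : Set G) = H)
    (h1 : (1 : G) ∈ S) (hinv : ∀ s ∈ S, s⁻¹ ∈ S) (hTS : T ⊆ S) (n : ℕ) :
    ∃ x, x ∈ stmt13Ball S (n + 1) ∧ x ∉ stmt13Ball S n := by
  by_contra hc
  push_neg at hc
  have hsub : stmt13Ball S (n + 1) ⊆ stmt13Ball S n := fun x hx => hc x hx
  have hstab : ∀ k, stmt13Ball S (n + k) ⊆ stmt13Ball S n := by
    intro k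
    induction k with
    | zero => exact fun _ h => h
    | succ k ih =>
      intro x hx
      obtain ⟨s, hs, y, hy, rfl⟩ := (stmt13Ball_succ_mem S).1 hx
      exact hsub ((stmt13Ball_succ_mem S).2 ⟨s, hs, y, ih hy, rfl⟩)
  have hHsub : (H : Set G) ⊆ ↑(stmt13Ball S n) := by
    intro x hx
    rw [← hT] at hx
    obtain ⟨m, hm⟩ := stmt13Ball_covers h1 hinv hTS hx
    exact_mod_cast hstab m (stmt13Ball_mono h1 (Nat.le_add_left m n) hm)
  exact Hinf (Set.Finite.subset (stmt13Ball S n).finite_toSet hHsub)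

end Growth

/-- If a group `G` contains an infinite finitely generated subgroup, then there
is a finite subset `S ⊆ G` such that for every `N ≥ 1` there is a non-zero `ρ : G → ℕ` with
`N·ρ(t) ≤ Σ_{s ∈ S} ρ(s⁻¹t)` for all `t`. -/
theorem stmt13 {G : Type*} [Group G]
    (h : ∃ H : Subgroup G, (H : Set G).Infinite ∧ H.FG) :
    ∃ S : Finset G, ∀ N : ℕ, 1 ≤ N → ∃ ρ : G → ℕ,
      (∃ t : G, ρ t ≠ 0) ∧ ∀ t : G, N * ρ t ≤ ∑ s ∈ S, ρ (s⁻¹ * t) := by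
  classical
  obtain ⟨H, Hinf, Hfg⟩ := h
  obtain ⟨T, hT⟩ := Hfg
  set S : Finset G := insert 1 (T ∪ T.image (·⁻¹)) with hS
  have h1 : (1 : G) ∈ S := mem_insert_self _ _
  have hTS : T ⊆ S := fun x hx => by simp [hS, hx]
  have hinv : ∀ s ∈ S, s⁻¹ ∈ S := by
    intro s hs
    simp only [hS, mem_insert, mem_union, mem_image] at hs ⊢
    rcases hs with rfl | hs | ⟨u, hu, rfl⟩
    · left; simp
    · right; right; exact ⟨s, hs, rfl⟩
    · right; left; simpa using hu
  refine ⟨S, fun N _ => ?_⟩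
  -- the spheres
  set D : ℕ → Finset G := fun n => stmt13Ball S (n + 1) \ stmt13Ball S n with hD
  have hDne : ∀ n, ∃ x, x ∈ D n := by
    intro n
    obtain ⟨x, hx1, hx2⟩ := stmt13Ball_strict Hinf hT h1 hinv hTS n
    exact ⟨x, by simp [hD, mem_sdiff, hx1, hx2]⟩
  have hstrip : ∀ n (x : G), x ∈ D (n + 1) → ∃ s, s ∈ S ∧ s⁻¹ * x ∈ D n := by
    intro n x hx
    simp only [hD, mem_sdiff] at hx
    obtain ⟨s, hs, y, hy, rfl⟩ := (stmt13Ball_succ_mem S).1 hx.1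
    refine ⟨s, hs, ?_⟩
    simp only [hD, mem_sdiff, inv_mul_cancel_left]
    refine ⟨hy, fun hyn => hx.2 ?_⟩
    exact (stmt13Ball_succ_mem S).2 ⟨s, hs, y, hyn, rfl⟩
  -- König's lemma: an infinite geodesic ray
  haveI : ∀ n, Nonempty {x // x ∈ D n} := fun n => ⟨⟨(hDne n).choose, (hDne n).choose_spec⟩⟩
  let f : ∀ n, {x // x ∈ D (n + 1)} → {x // x ∈ D n} := fun n x =>
    ⟨(hstrip n x.1 x.2).choose⁻¹ * x.1, ((hstrip n x.1 x.2).choose_spec).2⟩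
  obtain ⟨t, ht⟩ := stmt13_konig (X := fun n => {x // x ∈ D n}) f
  set u : ℕ → G := fun n => (t n).1 with hu
  have humem : ∀ n, u n ∈ stmt13Ball S (n + 1) ∧ u n ∉ stmt13Ball S n := by
    intro n
    have := (t n).2
    simp only [hD, mem_sdiff] at this
    exact this
  have hchain : ∀ n, ∃ s ∈ S, s⁻¹ * u n = u (n + 1) := by
    intro n
    obtain ⟨hsS, -⟩ := (hstrip n (t (n + 1)).1 (t (n + 1)).2).choose_spec
    have this1 : (hstrip n (t (n + 1)).1 (t (n + 1)).2).choose⁻¹ * u (n + 1) = u n := by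
      have := congrArg Subtype.val (ht n)
      simpa [f, hu] using this
    refine ⟨(hstrip n (t (n + 1)).1 (t (n + 1)).2).choose⁻¹, hinv _ hsS, ?_⟩
    rw [inv_inv, ← this1]
    exact mul_inv_cancel_left _ _
  have hinj : ∀ m n : ℕ, u m = u n → m = n := by
    have key : ∀ m n : ℕ, m < n → u m ≠ u n := by
      intro m n hmn he
      exact (humem n).2 (he ▸ stmt13Ball_mono h1 (by omega : m + 1 ≤ n) (humem m).1)
    intro m n he
    rcases lt_trichotomy m n with hlt | rfl | hlt
    · exact absurd he (key m n hlt)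
    · rfl
    · exact absurd he.symm (key n m hlt)
  set ρ : G → ℕ := fun x => if h : ∃ n, x = u n then N ^ h.choose else 0 with hρ
  have hρu : ∀ k, ρ (u k) = N ^ k := by
    intro k
    have hk : ∃ n, u k = u n := ⟨k, rfl⟩
    rw [hρ]
    simp only [dif_pos hk]
    congr 1
    exact (hinj k hk.choose hk.choose_spec).symm
  refine ⟨ρ, ⟨u 0, by rw [hρu 0]; simp⟩, ?_⟩
  intro x
  by_cases hx : ∃ n, x = u n
  · obtain ⟨k, rfl⟩ := hx
    rw [hρu k]
    obtain ⟨s, hs, hsk⟩ := hchain k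
    calc N * N ^ k = N ^ (k + 1) := by ring
      _ = ρ (s⁻¹ * u k) := by rw [hsk, hρu]
      _ ≤ ∑ s ∈ S, ρ (s⁻¹ * u k) :=
          Finset.single_le_sum (f := fun z => ρ (z⁻¹ * u k)) (fun i _ => Nat.zero_le _) hs
  · rw [hρ]
    simp only [dif_neg hx, Nat.mul_zero]
    exact Nat.zero_le _
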